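/- Let k ≥ 2 be an integer, let R > 0 be real, and let x be a nonzero real number with |x| ≥ R/sin(π/(2k)). Then for every complex number z with |z| ≤ R, the real part of −sgn(x)^k/(x − z)^k is at most 0, where sgn(x) is the sign of x (equal to 1 if x > 0 and −1 if x < 0). Moreover, for z = 0 the real part of −sgn(x)^k/x^k is strictly negative. -/

import Mathlib

lemma key_ineq (R s X a b : ℝ) (hR : 0 < R) (hs : 0 < s) (hs1 : s < 1)
    (hX : R ≤ s * X) (hd : (a - X) ^ 2 + b ^ 2 ≤ R ^ 2) :
    b ^ 2 ≤ s ^ 2 * (a ^ 2 + b ^ 2) := by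
  set t := a - X with htdef
  have ht2 : t ^ 2 ≤ R ^ 2 := by nlinarith [sq_nonneg b]
  have htlb : -R ≤ t := by nlinarith
  have h2 : 0 ≤ R + t * s := by nlinarith
  have h1 : R + t * s ≤ a * s := by nlinarith
  have hsq : (R + t * s) ^ 2 ≤ (a * s) ^ 2 := pow_le_pow_left₀ h2 h1 2
  have hmid : (R ^ 2 - t ^ 2) * (1 - s ^ 2) ≤ (R + t * s) ^ 2 := by
    nlinarith [sq_nonneg (t + R * s)]
  have hb : b ^ 2 * (1 - s ^ 2) ≤ (R ^ 2 - t ^ 2) * (1 - s ^ 2) :=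
    mul_le_mul_of_nonneg_right (by linarith) (by nlinarith)
  nlinarith [hb, hmid, hsq]

theorem stmt11 (k : ℕ) (hk : 2 ≤ k) (R : ℝ) (hR : 0 < R) (x : ℝ) (hx : x ≠ 0)
    (hxR : R / Real.sin (Real.pi / (2 * k)) ≤ |x|) :
    (∀ z : ℂ, ‖z‖ ≤ R →
      (-((Real.sign x : ℂ) ^ k) / ((x : ℂ) - z) ^ k).re ≤ 0) ∧
    ((-((Real.sign x : ℂ) ^ k) / (x : ℂ) ^ k).re < 0) := by
  have pi_pos := Real.pi_pos
  set ε := Real.sign x with hεdef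
  have hε1 : ε = 1 ∨ ε = -1 := by
    rcases hx.lt_or_gt with h | h
    · right; exact Real.sign_of_neg h
    · left; exact Real.sign_of_pos h
  have hεx : ε * x = |x| := by
    rcases hx.lt_or_gt with h | h
    · rw [hεdef, Real.sign_of_neg h, abs_of_neg h]; ring
    · rw [hεdef, Real.sign_of_pos h, abs_of_pos h]; ring
  have hε2 : ε ^ 2 = 1 := by rcases hε1 with h | h <;> rw [h] <;> norm_num
  have hkR : (2 : ℝ) ≤ (k : ℝ) := by exact_mod_cast hk
  set θ := Real.pi / (2 * k) with hθdef
  have hθpos : 0 < θ := by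
    rw [hθdef]; positivity
  have hθlt : θ < Real.pi / 2 := by
    rw [hθdef, div_lt_div_iff₀ (by positivity) (by norm_num)]
    nlinarith
  have hcos : 0 < Real.cos θ := Real.cos_pos_of_mem_Ioo ⟨by linarith, hθlt⟩
  set s := Real.sin θ with hsdef
  have hspos : 0 < s := Real.sin_pos_of_pos_of_lt_pi hθpos (by linarith)
  have hslt1 : s < 1 := by nlinarith [Real.sin_sq_add_cos_sq θ]
  have hxpos : 0 < |x| := abs_pos.mpr hx
  have hxs : R ≤ s * |x| := by
    rw [div_le_iff₀ hspos] at hxR; linarith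
  have hxR' : R < |x| := by nlinarith
  have hkθ : (k : ℝ) * θ = Real.pi / 2 := by
    rw [hθdef]; field_simp
  have hεC2 : ((ε : ℂ)) ^ 2 = 1 := by
    rw [← Complex.ofReal_pow, hε2, Complex.ofReal_one]
  constructor
  · intro z hz
    set w : ℂ := (ε : ℂ) * ((x : ℂ) - z) with hw
    have hwre : w.re = |x| - ε * z.re := by
      rw [← hεx]
      simp [hw, Complex.mul_re, Complex.sub_re, Complex.sub_im]
      ring
    have hwim : w.im = -(ε * z.im) := by
      simp [hw, Complex.mul_im, Complex.sub_re, Complex.sub_im]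
    have hεz : |ε * z.re| ≤ R := by
      have h1 : |z.re| ≤ R := (Complex.abs_re_le_norm z).trans hz
      rcases hε1 with h | h <;> rw [h] <;> simpa [abs_mul] using h1
    have hrepos : 0 < w.re := by
      rw [hwre]
      have := abs_le.1 hεz
      linarith
    have hwne : w ≠ 0 := by
      intro h; rw [h] at hrepos; simp at hrepos
    have hz2 : z.re ^ 2 + z.im ^ 2 ≤ R ^ 2 := by
      have h1 := Complex.sq_norm z
      rw [Complex.normSq_apply] at h1
      nlinarith [norm_nonneg z]
    have hdist : (w.re - |x|) ^ 2 + w.im ^ 2 ≤ R ^ 2 := by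
      rw [hwre, hwim]
      nlinarith [hz2, hε2, sq_nonneg z.re, sq_nonneg z.im]
    have hkey : w.im ^ 2 ≤ s ^ 2 * (w.re ^ 2 + w.im ^ 2) :=
      key_ineq R s |x| w.re w.im hR hspos hslt1 hxs hdist
    have habs2 : ‖w‖ ^ 2 = w.re ^ 2 + w.im ^ 2 := by
      rw [Complex.sq_norm, Complex.normSq_apply]; ring
    have habspos : 0 < ‖w‖ := norm_pos_iff.mpr hwne
    have habsim : |w.im| ≤ s * ‖w‖ := by
      have h2 : |w.im| ^ 2 ≤ (s * ‖w‖) ^ 2 := by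
        rw [sq_abs, mul_pow, habs2]; exact hkey
      exact (pow_le_pow_iff_left₀ (abs_nonneg _) (by positivity) (by norm_num)).1 h2
    have hsinarg : |Real.sin w.arg| ≤ s := by
      rw [Complex.sin_arg, abs_div, _root_.abs_of_nonneg (norm_nonneg w),
        div_le_iff₀ habspos]
      exact habsim
    have hargle : |w.arg| ≤ θ := by
      by_contra h
      push_neg at h
      have h2 : |w.arg| < Real.pi / 2 := Complex.abs_arg_lt_pi_div_two_iff.2 (Or.inl hrepos)
      have h3 : s < Real.sin |w.arg| :=
        Real.strictMonoOn_sin ⟨by linarith, hθlt.le⟩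
          ⟨by linarith [abs_nonneg w.arg], h2.le⟩ h
      have h4 : Real.sin |w.arg| = |Real.sin w.arg| := by
        rcases le_or_gt 0 w.arg with h0 | h0
        · rw [_root_.abs_of_nonneg h0,
            _root_.abs_of_nonneg (Real.sin_nonneg_of_nonneg_of_le_pi h0 (Complex.arg_le_pi w))]
        · have hsle : Real.sin w.arg ≤ 0 :=
            Real.sin_nonpos_of_nonpos_of_neg_pi_le h0.le (Complex.neg_pi_lt_arg w).le
          rw [abs_of_neg h0, Real.sin_neg, abs_of_nonpos hsle]
      linarith
    have hrewk : 0 ≤ (w ^ k).re := by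
      have h1 : w ^ k = ((‖w‖ ^ k : ℝ) : ℂ)
          * Complex.exp (((k : ℝ) * w.arg : ℝ) * Complex.I) := by
        conv_lhs => rw [← Complex.norm_mul_exp_arg_mul_I w]
        rw [mul_pow, ← Complex.exp_nat_mul]
        push_cast
        ring_nf
      rw [h1, Complex.re_ofReal_mul, Complex.exp_ofReal_mul_I_re]
      have hb : |(k : ℝ) * w.arg| ≤ Real.pi / 2 := by
        rw [abs_mul, _root_.abs_of_nonneg (by positivity : (0:ℝ) ≤ (k:ℝ)), ← hkθ]
        exact mul_le_mul_of_nonneg_left hargle (by positivity)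
      have hb' := abs_le.1 hb
      have hcosnn : 0 ≤ Real.cos ((k : ℝ) * w.arg) :=
        Real.cos_nonneg_of_neg_pi_div_two_le_of_le (by linarith [hb'.1]) hb'.2
      positivity
    have hxz : ((x : ℂ) - z) ^ k = (ε : ℂ) ^ k * w ^ k := by
      calc ((x : ℂ) - z) ^ k = ((ε : ℂ) * w) ^ k := by
            rw [hw, ← mul_assoc, ← sq, hεC2, one_mul]
        _ = (ε : ℂ) ^ k * w ^ k := mul_pow _ _ _
    have hεkne : ((ε : ℂ)) ^ k ≠ 0 := by
      rcases hε1 with h | h <;> rw [h] <;> simp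
    have hfin : -((ε : ℂ) ^ k) / ((x : ℂ) - z) ^ k = -((w ^ k)⁻¹) := by
      rw [hxz, neg_div, neg_inj, div_mul_cancel_left₀ hεkne]
    rw [hfin]
    simp only [Complex.neg_re, neg_nonpos, Left.neg_nonpos_iff, Complex.inv_re]
    exact div_nonneg hrewk (Complex.normSq_nonneg _)
  · have hx' : (x : ℂ) ≠ 0 := by exact_mod_cast hx
    have hcast : -((ε : ℂ) ^ k) / (x : ℂ) ^ k = ((-(ε ^ k) / x ^ k : ℝ) : ℂ) := by
      push_cast
      ring
    rw [hcast, Complex.ofReal_re]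
    have hdivx : ε / x = |x| / x ^ 2 := by
      rw [div_eq_div_iff hx (by positivity)]
      linear_combination x * hεx
    have hdivpos : 0 < ε / x := by
      rw [hdivx]; positivity
    have hp : 0 < (ε / x) ^ k := pow_pos hdivpos k
    rw [div_pow] at hp
    rw [neg_div]
    linarith
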